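/- For a prime p and integers i ≥ 0, j ≥ 1, the p-adic valuation of (p^i(p^j−1))! / ((p^j−1)!)^{p^i} equals (p^i − 1)·j. -/

import Mathlib

lemma digits_pow_sub_one {p : ℕ} (hp : 1 < p) (j : ℕ) :
    p.digits (p ^ j - 1) = List.replicate j (p - 1) := by
  induction j with
  | zero => simp
  | succ j ih =>
    have hpj : 1 ≤ p ^ j := Nat.one_le_pow _ _ (by omega)
    have h1 : p ^ (j + 1) - 1 = p * (p ^ j - 1) + (p - 1) := by
      have : p ^ (j + 1) = p * p ^ j := by ring
      rw [this]
      have h2 : 1 ≤ p * p ^ j := Nat.mul_pos (by omega) hpj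
      zify [hpj, hp.le, h2]
      ring
    have hne : p ^ (j + 1) - 1 ≠ 0 := by
      have : p ^ (j + 1) ≥ p ^ 1 := Nat.pow_le_pow_right (by omega) (by omega)
      simp only [pow_one] at this; omega
    rw [Nat.digits_def' hp (Nat.pos_of_ne_zero hne), h1]
    have hmod : (p * (p ^ j - 1) + (p - 1)) % p = p - 1 := by
      rw [Nat.mul_add_mod]
      exact Nat.mod_eq_of_lt (by omega)
    have hdiv : (p * (p ^ j - 1) + (p - 1)) / p = p ^ j - 1 := by
      rw [Nat.mul_add_div (by omega)]
      rw [Nat.div_eq_of_lt (by omega)]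
      omega
    rw [hmod, hdiv, ih, List.replicate_succ]

/-- For a prime `p` and integers `i ≥ 0`, `j ≥ 1`, the `p`-adic valuation of
`(p^i(p^j−1))! / ((p^j−1)!)^(p^i)` equals `(p^i − 1)·j`. -/
theorem stmt1 (p i j : ℕ) (hp : p.Prime) (hj : 1 ≤ j) :
    padicValNat p ((p ^ i * (p ^ j - 1)).factorial / ((p ^ j - 1).factorial) ^ (p ^ i))
      = (p ^ i - 1) * j := by
  haveI : Fact p.Prime := ⟨hp⟩
  have hp1 : 1 < p := hp.one_lt
  set n := p ^ j - 1 with hn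
  have hn0 : n ≠ 0 := by
    have : p ^ 1 ≤ p ^ j := Nat.pow_le_pow_right (by omega) hj
    simp only [pow_one] at this; simp only [hn]; omega
  set m := p ^ i with hm
  have hm1 : 1 ≤ m := Nat.one_le_pow _ _ (by omega)
  -- divisibility
  have hdvd : (n.factorial) ^ m ∣ (m * n).factorial := by
    refine ⟨Nat.uniformBell m n * m.factorial, ?_⟩
    rw [← Nat.uniformBell_mul_eq m hn0]; ring
  rw [padicValNat.div_of_dvd hdvd,
    padicValNat.pow n.factorial m]
  -- digit sums
  have hsum1 : (p.digits n).sum = j * (p - 1) := by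
    rw [hn, digits_pow_sub_one hp1]; simp [List.sum_replicate, mul_comm]
  have hsum2 : (p.digits (m * n)).sum = j * (p - 1) := by
    rw [hm, Nat.digits_base_pow_mul hp1 (Nat.pos_of_ne_zero hn0)]
    simp [hsum1]
  set A := padicValNat p (m * n).factorial with hA
  set B := padicValNat p n.factorial with hB
  have e1 : (p - 1) * A = m * n - j * (p - 1) := by
    rw [hA, sub_one_mul_padicValNat_factorial, hsum2]
  have e2 : (p - 1) * B = n - j * (p - 1) := by
    rw [hB, sub_one_mul_padicValNat_factorial, hsum1]
  have hle1 : j * (p - 1) ≤ n := by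
    rw [← hsum1]; exact Nat.digit_sum_le p n
  have hle2 : j * (p - 1) ≤ m * n := le_trans hle1 (Nat.le_mul_of_pos_left n hm1)
  have e1' : (p - 1) * A + j * (p - 1) = m * n := by omega
  have e2' : (p - 1) * B + j * (p - 1) = n := by omega
  have key : A = m * B + (m - 1) * j := by
    have hq1 : 0 < p - 1 := by omega
    apply Nat.eq_of_mul_eq_mul_left hq1
    zify [hm1, hp1.le] at e1' e2' ⊢
    linear_combination e1' - (m : ℤ) * e2'
  rw [key, Nat.add_sub_cancel_left]
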